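/- Consider scale-free percolation on ℤ^d with i.i.d. weights (W_x) and edge probabilities p_{xy} = 1 - exp(-λ W_x W_y / |x-y|^α), where λ > 0 and α ≤ d. If the weight distribution satisfies P(W > 0) > 0 and E[W] > 0 (possibly infinite), then conditionally on W₀ = w for any w > 0, the degree D₀ of the origin is infinite almost surely. -/

import Mathlib

open MeasureTheory ProbabilityTheory Real

/-- Euclidean norm on the lattice `ℤ^d`. -/
noncomputable def znorm (d : ℕ) (x : Fin d → ℤ) : ℝ :=
  Real.sqrt (∑ i, ((x i : ℝ)) ^ 2)

/-- A pair of finite sets of ordered pairs of vertices represents a valid collection of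
(distinct) edges: no loops, no repetitions (also up to swapping), and disjointness. -/
def OkPairs {V : Type*} [DecidableEq V] (S T : Finset (V × V)) : Prop :=
  (∀ p ∈ S ∪ T, p.1 ≠ p.2) ∧ (∀ p ∈ S ∪ T, p.swap ∉ S ∪ T) ∧ Disjoint S T

/-! ### Auxiliary real-analysis lemmas -/

lemma exp_neg_le_chord {x : ℝ} (hx : 0 ≤ x) :
    Real.exp (-x) ≤ 1 - (1 - Real.exp (-1)) * min x 1 := by
  rcases le_or_gt x 1 with h | h
  · rw [min_eq_left h]
    have hc := convexOn_exp.2 (Set.mem_univ (0:ℝ)) (Set.mem_univ (-1:ℝ))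
      (by linarith : (0:ℝ) ≤ 1 - x) hx (by ring)
    simp only [smul_eq_mul, mul_zero, mul_neg, mul_one, zero_add, Real.exp_zero] at hc
    nlinarith [hc]
  · rw [min_eq_right h.le]
    have h2 : Real.exp (-x) ≤ Real.exp (-1) := Real.exp_le_exp.2 (by linarith)
    linarith

lemma min_one_mul_le {a b : ℝ} (ha : 0 ≤ a) (hb : 0 ≤ b) :
    min a 1 * min b 1 ≤ min (a * b) 1 := by
  apply le_min
  · exact mul_le_mul (min_le_left a 1) (min_le_left b 1) (le_min hb zero_le_one) ha
  · calc min a 1 * min b 1 ≤ 1 * 1 :=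
        mul_le_mul (min_le_right a 1) (min_le_right b 1) (le_min hb zero_le_one) zero_le_one
      _ = 1 := one_mul 1

/-! ### Lemmas about `znorm` -/

lemma znorm_nonneg (d : ℕ) (y : Fin d → ℤ) : 0 ≤ znorm d y := Real.sqrt_nonneg _

lemma one_le_znorm {d : ℕ} {y : Fin d → ℤ} (hy : y ≠ 0) : 1 ≤ znorm d y := by
  obtain ⟨i, hi⟩ : ∃ i, y i ≠ 0 := by
    by_contra h; push_neg at h; exact hy (funext h)
  have h1 : (1:ℝ) ≤ ((y i : ℝ)) ^ 2 := by
    have h0 : (1:ℤ) ≤ (y i) ^ 2 := by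
      have h2 := Int.one_le_abs (by exact hi)
      have h3 : 1 * 1 ≤ |y i| * |y i| := mul_le_mul h2 h2 zero_le_one (abs_nonneg _)
      calc (1:ℤ) = 1*1 := by ring
        _ ≤ |y i| * |y i| := h3
        _ = (y i)^2 := by rw [← abs_mul, abs_mul_self]; ring
    exact_mod_cast h0
  have h2 : (1:ℝ) ≤ ∑ j, ((y j : ℝ)) ^ 2 :=
    h1.trans (Finset.single_le_sum (f := fun j => ((y j : ℝ))^2)
      (fun j _ => sq_nonneg _) (Finset.mem_univ i))
  calc (1:ℝ) = Real.sqrt 1 := (Real.sqrt_one).symm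
    _ ≤ znorm d y := Real.sqrt_le_sqrt h2

lemma znorm_zero_sub (d : ℕ) (y : Fin d → ℤ) : znorm d (0 - y) = znorm d y := by
  unfold znorm
  congr 1
  apply Finset.sum_congr rfl
  intro i _
  have : ((0 - y) i : ℝ) = -(y i : ℝ) := by simp [Pi.sub_apply]
  rw [this, neg_sq]

lemma znorm_le_of_bound {d : ℕ} {y : Fin d → ℤ} {m : ℝ} (hm : 0 ≤ m)
    (h : ∀ i, |(y i : ℝ)| ≤ m) : znorm d y ≤ Real.sqrt d * m := by
  have h1 : ∑ i, ((y i : ℝ)) ^ 2 ≤ (d : ℝ) * m ^ 2 := by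
    calc ∑ i, ((y i : ℝ)) ^ 2 ≤ ∑ _i : Fin d, m ^ 2 := by
          apply Finset.sum_le_sum
          intro i _
          calc ((y i : ℝ)) ^ 2 = |(y i : ℝ)| ^ 2 := (sq_abs _).symm
            _ ≤ m ^ 2 := by nlinarith [h i, abs_nonneg ((y i : ℝ))]
      _ = (d : ℝ) * m ^ 2 := by simp [Finset.sum_const, Finset.card_univ, nsmul_eq_mul]
  calc znorm d y ≤ Real.sqrt ((d:ℝ) * m ^ 2) := Real.sqrt_le_sqrt h1
    _ = Real.sqrt d * m := by
        rw [Real.sqrt_mul (by positivity), Real.sqrt_sq hm]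

/-! ### Independence: the integral of a product of functions of independent variables factorizes -/

lemma lintegral_prod_comp_indep {Ω : Type*} [MeasureSpace Ω] [IsProbabilityMeasure (ℙ : Measure Ω)]
    {ι : Type*} [DecidableEq ι] {W : ι → Ω → ℝ}
    (hiid : iIndepFun W ℙ) (hWmeas : ∀ i, Measurable (W i))
    (g : ι → ℝ → ENNReal) (hg : ∀ i, Measurable (g i)) (s : Finset ι) :
    ∫⁻ ω, ∏ i ∈ s, g i (W i ω) ∂ℙ = ∏ i ∈ s, ∫⁻ ω, g i (W i ω) ∂ℙ := by
  induction s using Finset.cons_induction with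
  | empty => simp
  | cons a s ha ih =>
    have hmeasprod : Measurable (fun ω => ∏ i ∈ s, g i (W i ω)) :=
      Finset.measurable_prod _ (fun i _ => (hg i).comp (hWmeas i))
    have h1 := hiid.indepFun_finset s {a}
      (by simp [Finset.disjoint_singleton_right, ha]) hWmeas
    have hφ : Measurable (fun v : s → ℝ => ∏ i : s, g i (v i)) :=
      Finset.measurable_prod _ (fun i _ => (hg i).comp (measurable_pi_apply i))
    have hψ : Measurable (fun v : ({a} : Finset ι) → ℝ =>
        g a (v ⟨a, Finset.mem_singleton_self a⟩)) :=
      (hg a).comp (measurable_pi_apply _)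
    have hind : IndepFun (fun ω => ∏ i ∈ s, g i (W i ω)) (fun ω => g a (W a ω)) ℙ := by
      have h2 := h1.comp hφ hψ
      convert h2 using 1
      · funext ω
        simp only [Function.comp_apply]
        exact (Finset.prod_coe_sort s (fun i => g i (W i ω))).symm
      · rfl
    simp only [Finset.prod_cons]
    rw [← ih]
    have := lintegral_mul_eq_lintegral_mul_lintegral_of_indepFun
      hmeasprod ((hg a).comp (hWmeas a)) hind
    calc ∫⁻ ω, g a (W a ω) * ∏ i ∈ s, g i (W i ω) ∂ℙ
        = ∫⁻ ω, ((fun ω => ∏ i ∈ s, g i (W i ω)) * (fun ω => g a (W a ω))) ω ∂ℙ := by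
          congr 1; funext ω; simp [mul_comm]
      _ = (∫⁻ ω, ∏ i ∈ s, g i (W i ω) ∂ℙ) * ∫⁻ ω, g a (W a ω) ∂ℙ := this
      _ = (∫⁻ ω, g a (W a ω) ∂ℙ) * ∫⁻ ω, ∏ i ∈ s, g i (W i ω) ∂ℙ := mul_comm _ _

/-! ### The single-factor bound -/

lemma factor_bound {Ω : Type*} [MeasureSpace Ω] [IsProbabilityMeasure (ℙ : Measure Ω)]
    {Z : Ω → ℝ} (hZ : Measurable Z) (hZnn : ∀ ω, 0 ≤ Z ω)
    {δ : ℝ} (hδ : 0 < δ) {c : ℝ} (hc : 0 ≤ c) :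
    ∫⁻ ω, ENNReal.ofReal (Real.exp (-(c * Z ω))) ∂ℙ ≤
      ENNReal.ofReal (Real.exp
        (-((ℙ {ω | δ < Z ω}).toReal * ((1 - Real.exp (-1)) * min (c * δ) 1)))) := by
  set A : Set Ω := {ω | δ < Z ω} with hA
  have hAmeas : MeasurableSet A := measurableSet_lt measurable_const hZ
  set s : ℝ := (1 - Real.exp (-1)) * min (c * δ) 1 with hs
  have hκ0 : (0:ℝ) ≤ 1 - Real.exp (-1) := by
    have : Real.exp (-1) ≤ 1 := by
      rw [Real.exp_le_one_iff]; norm_num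
    linarith
  have hκ1 : 1 - Real.exp (-1) ≤ 1 := by linarith [Real.exp_pos (-1)]
  have hmin0 : (0:ℝ) ≤ min (c * δ) 1 := le_min (by positivity) zero_le_one
  have hs0 : 0 ≤ s := mul_nonneg hκ0 hmin0
  have hs1 : s ≤ 1 := by
    calc s ≤ 1 * 1 := mul_le_mul hκ1 (min_le_right _ _) hmin0 zero_le_one
      _ = 1 := one_mul 1
  set a : ℝ := (ℙ A).toReal with ha
  have ha0 : 0 ≤ a := ENNReal.toReal_nonneg
  have ha1 : a ≤ 1 := by
    rw [ha]
    exact ENNReal.toReal_le_of_le_ofReal zero_le_one (by simpa using prob_le_one)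
  have hpt : ∀ ω, ENNReal.ofReal (Real.exp (-(c * Z ω))) ≤
      A.indicator (fun _ => ENNReal.ofReal (1 - s)) ω + Aᶜ.indicator (fun _ => 1) ω := by
    intro ω
    by_cases hω : ω ∈ A
    · rw [Set.indicator_of_mem hω, Set.indicator_of_notMem (by simpa using hω), add_zero]
      apply ENNReal.ofReal_le_ofReal
      have hx0 : 0 ≤ c * Z ω := mul_nonneg hc (hZnn ω)
      have h1 : Real.exp (-(c * Z ω)) ≤ 1 - (1 - Real.exp (-1)) * min (c * Z ω) 1 :=
        exp_neg_le_chord hx0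
      have h2 : min (c * δ) 1 ≤ min (c * Z ω) 1 := by
        apply min_le_min _ le_rfl
        exact mul_le_mul_of_nonneg_left (le_of_lt hω) hc
      nlinarith [h1, h2, hκ0]
    · rw [Set.indicator_of_notMem hω, Set.indicator_of_mem (by simpa using hω), zero_add]
      calc ENNReal.ofReal (Real.exp (-(c * Z ω))) ≤ ENNReal.ofReal 1 := by
            apply ENNReal.ofReal_le_ofReal
            rw [Real.exp_le_one_iff]
            simp [mul_nonneg hc (hZnn ω)]
        _ = 1 := ENNReal.ofReal_one
  calc ∫⁻ ω, ENNReal.ofReal (Real.exp (-(c * Z ω))) ∂ℙ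
      ≤ ∫⁻ ω, (A.indicator (fun _ => ENNReal.ofReal (1 - s)) ω
          + Aᶜ.indicator (fun _ => 1) ω) ∂ℙ := lintegral_mono hpt
    _ = ENNReal.ofReal (1 - s) * ℙ A + 1 * ℙ Aᶜ := by
        rw [lintegral_add_left (measurable_const.indicator hAmeas)]
        rw [lintegral_indicator_const hAmeas, lintegral_indicator_const hAmeas.compl]
    _ = ENNReal.ofReal (1 - s) * ENNReal.ofReal a + ENNReal.ofReal (1 - a) := by
        rw [one_mul, prob_compl_eq_one_sub hAmeas, ha,
          ENNReal.ofReal_toReal (measure_ne_top _ _)]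
        congr 1
        rw [ENNReal.ofReal_sub _ ha0, ENNReal.ofReal_one, ha,
          ENNReal.ofReal_toReal (measure_ne_top _ _)]
    _ = ENNReal.ofReal ((1 - s) * a + (1 - a)) := by
        rw [← ENNReal.ofReal_mul (by linarith), ← ENNReal.ofReal_add
          (mul_nonneg (by linarith) ha0) (by linarith)]
    _ ≤ ENNReal.ofReal (Real.exp (-(a * s))) := by
        apply ENNReal.ofReal_le_ofReal
        have := Real.add_one_le_exp (-(a * s))
        nlinarith [this]

/-! ### Shells in the lattice and the divergence of `∑ |y|^{-α}` -/

noncomputable def shell (d k : ℕ) : Finset (Fin d → ℤ) :=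
  Fintype.piFinset (fun i : Fin d =>
    if (i : ℕ) = 0 then Finset.Ioc ((2^k : ℤ)) (2^(k+1)) else Finset.Icc 1 (2^k))

lemma shell_card (d k : ℕ) : (shell d k).card = (2^k)^d := by
  rw [shell, Fintype.card_piFinset]
  have h : ∀ i : Fin d,
      (if (i:ℕ) = 0 then Finset.Ioc ((2^k:ℤ)) (2^(k+1)) else Finset.Icc 1 (2^k)).card = 2^k := by
    intro i
    split
    · rw [Int.card_Ioc]
      have : (2:ℤ)^(k+1) - 2^k = ((2^k : ℕ) : ℤ) := by push_cast; ring
      rw [this, Int.toNat_natCast]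
    · rw [Int.card_Icc]
      have : (2:ℤ)^k + 1 - 1 = ((2^k : ℕ) : ℤ) := by push_cast; ring
      rw [this, Int.toNat_natCast]
  simp only [h]
  simp [Finset.prod_const, Finset.card_univ]

lemma shell_mem_le {d k : ℕ} {y : Fin d → ℤ} (hy : y ∈ shell d k) (i : Fin d) :
    1 ≤ y i ∧ y i ≤ 2^(k+1) := by
  rw [shell, Fintype.mem_piFinset] at hy
  have := hy i
  split at this
  · rw [Finset.mem_Ioc] at this
    constructor
    · have h1 : (1:ℤ) ≤ 2^k := one_le_pow₀ (by norm_num)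
      omega
    · exact this.2
  · rw [Finset.mem_Icc] at this
    refine ⟨this.1, this.2.trans ?_⟩
    have : (2:ℤ)^k ≤ 2^(k+1) := by
      apply pow_le_pow_right₀ (by norm_num) (by omega)
    omega

lemma shell_coord0 {d k : ℕ} (hd : 1 ≤ d) {y : Fin d → ℤ} (hy : y ∈ shell d k) :
    2^k < y ⟨0, hd⟩ ∧ y ⟨0, hd⟩ ≤ 2^(k+1) := by
  rw [shell, Fintype.mem_piFinset] at hy
  have := hy ⟨0, hd⟩
  simp only [if_pos rfl] at this
  exact Finset.mem_Ioc.mp this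

lemma shell_ne_zero {d k : ℕ} (hd : 1 ≤ d) {y : Fin d → ℤ} (hy : y ∈ shell d k) : y ≠ 0 := by
  intro h
  have h1 := (shell_mem_le hy ⟨0, hd⟩).1
  rw [h] at h1
  simp at h1

lemma shell_disjoint {d : ℕ} (hd : 1 ≤ d) {k l : ℕ} (hkl : k < l) :
    Disjoint (shell d k) (shell d l) := by
  rw [Finset.disjoint_left]
  intro y hyk hyl
  have h1 := (shell_coord0 hd hyk).2
  have h2 := (shell_coord0 hd hyl).1
  have h3 : (2:ℤ)^(k+1) ≤ 2^l := pow_le_pow_right₀ (by norm_num) (by omega)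
  omega

lemma shell_znorm_le {d k : ℕ} {y : Fin d → ℤ} (hy : y ∈ shell d k) :
    znorm d y ≤ Real.sqrt d * (2 * 2^k) := by
  apply znorm_le_of_bound (by positivity)
  intro i
  obtain ⟨h1, h2⟩ := shell_mem_le hy i
  rw [abs_of_pos (by exact_mod_cast h1.trans_lt' (by norm_num) : (0:ℝ) < (y i : ℝ))]
  calc ((y i : ℝ)) ≤ ((2^(k+1) : ℤ) : ℝ) := by exact_mod_cast h2
    _ = 2 * 2^k := by push_cast [pow_succ]; ring

lemma shell_sum_lower {d : ℕ} (hd : 1 ≤ d) {α : ℝ} (hα : 0 < α) (hαd : α ≤ (d:ℝ)) (k : ℕ) :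
    ((Real.sqrt d * 2) ^ α)⁻¹ ≤ ∑ y ∈ shell d k, (znorm d y ^ α)⁻¹ := by
  have hsd : (0:ℝ) < Real.sqrt d := Real.sqrt_pos.mpr (by exact_mod_cast hd.trans_lt' (by norm_num))
  have hA : (0:ℝ) < (Real.sqrt d * 2) ^ α := Real.rpow_pos_of_pos (by positivity) α
  have hBpos : (0:ℝ) < ((2:ℝ)^k) ^ α := Real.rpow_pos_of_pos (by positivity) α
  have hterm : ∀ y ∈ shell d k,
      ((Real.sqrt d * 2)^α * ((2:ℝ)^k)^α)⁻¹ ≤ (znorm d y ^ α)⁻¹ := by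
    intro y hy
    have h1 : znorm d y ≤ Real.sqrt d * 2 * 2^k := by
      have := shell_znorm_le hy
      linarith [this]
    have h0 : (0:ℝ) < znorm d y := lt_of_lt_of_le one_pos (one_le_znorm (shell_ne_zero hd hy))
    have h2 : znorm d y ^ α ≤ (Real.sqrt d * 2 * 2^k) ^ α :=
      Real.rpow_le_rpow h0.le h1 hα.le
    have h3 : (Real.sqrt d * 2 * 2^k : ℝ) ^ α = (Real.sqrt d * 2)^α * ((2:ℝ)^k)^α :=
      Real.mul_rpow (by positivity) (by positivity)
    rw [← h3]
    exact inv_anti₀ (Real.rpow_pos_of_pos h0 α) h2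
  calc ((Real.sqrt d * 2) ^ α)⁻¹
      ≤ ((2:ℝ)^k)^d * ((Real.sqrt d * 2)^α * ((2:ℝ)^k)^α)⁻¹ := by
        rw [mul_inv]
        have hB2 : ((2:ℝ)^k)^α ≤ ((2:ℝ)^k)^d := by
          calc ((2:ℝ)^k)^α ≤ ((2:ℝ)^k)^(d:ℝ) :=
              Real.rpow_le_rpow_of_exponent_le (one_le_pow₀ (by norm_num)) hαd
            _ = ((2:ℝ)^k)^d := Real.rpow_natCast _ d
        have h4 : (1:ℝ) ≤ ((2:ℝ)^k)^d * (((2:ℝ)^k)^α)⁻¹ := by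
          rw [← div_eq_mul_inv]
          exact (one_le_div hBpos).mpr hB2
        calc ((Real.sqrt d * 2) ^ α)⁻¹ = ((Real.sqrt d * 2) ^ α)⁻¹ * 1 := (mul_one _).symm
          _ ≤ ((Real.sqrt d * 2) ^ α)⁻¹ * (((2:ℝ)^k)^d * (((2:ℝ)^k)^α)⁻¹) :=
              mul_le_mul_of_nonneg_left h4 (by positivity)
          _ = ((2:ℝ)^k)^d * (((Real.sqrt d * 2)^α)⁻¹ * (((2:ℝ)^k)^α)⁻¹) := by ring
    _ ≤ ∑ y ∈ shell d k, (znorm d y ^ α)⁻¹ := by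
        have := Finset.card_nsmul_le_sum (shell d k)
          (fun y => (znorm d y ^ α)⁻¹) (((Real.sqrt d * 2)^α * ((2:ℝ)^k)^α)⁻¹) hterm
        rw [shell_card] at this
        calc ((2:ℝ)^k)^d * ((Real.sqrt d * 2)^α * ((2:ℝ)^k)^α)⁻¹
            = ((2^k)^d : ℕ) • ((Real.sqrt d * 2)^α * ((2:ℝ)^k)^α)⁻¹ := by
              rw [nsmul_eq_mul]; push_cast; ring
          _ ≤ _ := this

lemma shells_sum_sdiff {d : ℕ} (hd : 1 ≤ d) {α : ℝ} (hα : 0 < α) (hαd : α ≤ (d:ℝ))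
    (K : ℕ) (F : Finset (Fin d → ℤ)) :
    ((Real.sqrt d * 2) ^ α)⁻¹ * K - F.card ≤
      ∑ y ∈ (Finset.range K).biUnion (shell d) \ F, (znorm d y ^ α)⁻¹ := by
  classical
  set TT := (Finset.range K).biUnion (shell d) with hTT
  have hne : ∀ y ∈ TT, y ≠ 0 := by
    intro y hy
    rw [hTT, Finset.mem_biUnion] at hy
    obtain ⟨k, _, hk⟩ := hy
    exact shell_ne_zero hd hk
  have hterm1 : ∀ y ∈ TT, (znorm d y ^ α)⁻¹ ≤ 1 := by
    intro y hy
    have h1 : (1:ℝ) ≤ znorm d y ^ α := Real.one_le_rpow (one_le_znorm (hne y hy)) hα.le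
    exact inv_le_one_of_one_le₀ h1
  have hbig : ((Real.sqrt d * 2) ^ α)⁻¹ * K ≤ ∑ y ∈ TT, (znorm d y ^ α)⁻¹ := by
    rw [hTT, Finset.sum_biUnion]
    · calc ((Real.sqrt d * 2) ^ α)⁻¹ * K
          = ∑ _k ∈ Finset.range K, ((Real.sqrt d * 2) ^ α)⁻¹ := by
            rw [Finset.sum_const, Finset.card_range, nsmul_eq_mul]; ring
        _ ≤ ∑ k ∈ Finset.range K, ∑ y ∈ shell d k, (znorm d y ^ α)⁻¹ :=
            Finset.sum_le_sum (fun k _ => shell_sum_lower hd hα hαd k)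
    · intro k _ l _ hkl
      rcases lt_or_gt_of_ne hkl with h | h
      · exact shell_disjoint hd h
      · exact (shell_disjoint hd h).symm
  have hsplit : ∑ y ∈ TT \ (TT ∩ F), (znorm d y ^ α)⁻¹ + ∑ y ∈ TT ∩ F, (znorm d y ^ α)⁻¹
      = ∑ y ∈ TT, (znorm d y ^ α)⁻¹ := Finset.sum_sdiff Finset.inter_subset_left
  have hsmall : ∑ y ∈ TT ∩ F, (znorm d y ^ α)⁻¹ ≤ F.card := by
    calc ∑ y ∈ TT ∩ F, (znorm d y ^ α)⁻¹ ≤ ∑ _y ∈ TT ∩ F, (1:ℝ) :=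
        Finset.sum_le_sum (fun y hy => hterm1 y (Finset.mem_of_mem_inter_left hy))
      _ = (TT ∩ F).card := by simp
      _ ≤ F.card := by
          exact_mod_cast Finset.card_le_card Finset.inter_subset_right
  have hsd2 : TT \ (TT ∩ F) = TT \ F := by
    rw [Finset.sdiff_inter_self_left]
  rw [← hsd2]
  linarith [hsplit, hsmall, hbig]

theorem stmt_7 {Ω : Type*} [MeasureSpace Ω] [IsProbabilityMeasure (ℙ : Measure Ω)]
    (d : ℕ) (hd : 1 ≤ d) (α lam w : ℝ) (hα : 0 < α) (hαd : α ≤ (d : ℝ))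
    (hlam : 0 < lam) (hw : 0 < w)
    (W : (Fin d → ℤ) → Ω → ℝ) (Ed : (Fin d → ℤ) → (Fin d → ℤ) → Ω → Bool)
    (hWmeas : ∀ x, Measurable (W x))
    (hEmeas : ∀ x y, Measurable (Ed x y))
    (hWnn : ∀ x ω, 0 ≤ W x ω)
    -- conditioning on W₀ = w:
    (hW0 : ∀ ω, W 0 ω = w)
    (hiid : iIndepFun W ℙ)
    (hident : ∀ x y : Fin d → ℤ, x ≠ 0 → y ≠ 0 → IdentDistrib (W x) (W y) ℙ ℙ)
    -- P(W > 0) > 0 and E[W] > 0 (possibly infinite):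
    (hWpos : ∀ x : Fin d → ℤ, x ≠ 0 → 0 < ℙ {ω | 0 < W x ω})
    (hEW : ∀ x : Fin d → ℤ, x ≠ 0 → 0 < ∫⁻ ω, ENNReal.ofReal (W x ω) ∂ℙ)
    -- conditionally on the weights, edges are independent with
    -- probability p_{xy} = 1 - exp(-λ W_x W_y / |x-y|^α):
    (h_model : ∀ S T : Finset ((Fin d → ℤ) × (Fin d → ℤ)), OkPairs S T →
      ℙ {ω | (∀ p ∈ S, Ed p.1 p.2 ω = true) ∧ (∀ p ∈ T, Ed p.1 p.2 ω = false)} =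
        ∫⁻ ω,
          (∏ p ∈ S, ENNReal.ofReal
            (1 - Real.exp (-(lam * W p.1 ω * W p.2 ω / znorm d (p.1 - p.2) ^ α)))) *
          ∏ p ∈ T, ENNReal.ofReal
            (Real.exp (-(lam * W p.1 ω * W p.2 ω / znorm d (p.1 - p.2) ^ α))) ∂ℙ) :
    -- the degree of the origin is almost surely infinite:
    ∀ᵐ ω ∂ℙ, {y : Fin d → ℤ | y ≠ 0 ∧ Ed 0 y ω = true}.Infinite := by
  classical
  -- the bad events indexed by finite sets
  set E : Finset (Fin d → ℤ) → Set Ω :=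
    fun F => {ω | ∀ y, y ∉ F → y ≠ 0 → Ed 0 y ω = false} with hE
  -- reduce to showing each E F is null
  have main : ∀ F : Finset (Fin d → ℤ), ℙ (E F) = 0 := by
    intro F
    -- a fixed nonzero site and its weight
    have hy0ne : (fun _ => (1:ℤ) : Fin d → ℤ) ≠ 0 := by
      intro h
      have h2 := congrFun h ⟨0, hd⟩
      simp at h2
    set y0 : Fin d → ℤ := fun _ => 1 with hy0def
    set Z : Ω → ℝ := W y0 with hZdef
    -- find δ with positive probability that Z > δ
    obtain ⟨n, hn⟩ : ∃ n : ℕ, 0 < ℙ {ω | 1/((n:ℝ)+1) < Z ω} := by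
      by_contra hcon
      push_neg at hcon
      have h0 : ℙ {ω | 0 < Z ω} = 0 := by
        have hsub : {ω | 0 < Z ω} ⊆ ⋃ n : ℕ, {ω | 1/((n:ℝ)+1) < Z ω} := by
          intro ω hω
          obtain ⟨m, hm⟩ := exists_nat_one_div_lt (K := ℝ) hω
          exact Set.mem_iUnion.mpr ⟨m, hm⟩
        exact measure_mono_null hsub
          (measure_iUnion_null (fun m => le_antisymm (hcon m) (zero_le)))
      exact absurd h0 (hWpos y0 hy0ne).ne'
    set δ : ℝ := 1/((n:ℝ)+1) with hδdef
    have hδ : 0 < δ := by positivity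
    set a : ℝ := (ℙ {ω | δ < Z ω}).toReal with hadef
    have ha : 0 < a := ENNReal.toReal_pos hn.ne' (measure_ne_top _ _)
    set κ : ℝ := 1 - Real.exp (-1) with hκdef
    have hκ : 0 < κ := by
      have h1 : Real.exp (-1) < 1 := Real.exp_lt_one_iff.mpr (by norm_num)
      rw [hκdef]; linarith
    set β : ℝ := min (lam * w * δ) 1 with hβdef
    have hβ : 0 < β := lt_min (by positivity) one_pos
    have hsd : (0:ℝ) < Real.sqrt d :=
      Real.sqrt_pos.mpr (by exact_mod_cast hd.trans_lt' one_pos)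
    set c1 : ℝ := ((Real.sqrt d * 2) ^ α)⁻¹ with hc1def
    have hc1 : 0 < c1 := by
      rw [hc1def]
      exact inv_pos.mpr (Real.rpow_pos_of_pos (by positivity) α)
    -- edge-probability coefficients
    set c : (Fin d → ℤ) → ℝ := fun y => lam * w / znorm d y ^ α with hcdef
    have hcnn : ∀ y, 0 ≤ c y := by
      intro y
      rw [hcdef]
      exact div_nonneg (by positivity) (Real.rpow_nonneg (znorm_nonneg d y) α)
    set g : (Fin d → ℤ) → ℝ → ENNReal :=
      fun y t => ENNReal.ofReal (Real.exp (-(c y * t))) with hgdef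
    have hgmeas : ∀ y, Measurable (g y) := by
      intro y
      exact ENNReal.measurable_ofReal.comp
        (Real.measurable_exp.comp ((measurable_id.const_mul (c y)).neg))
    -- the key quantitative bound, for every number K of shells
    have key : ∀ K : ℕ,
        ℙ (E F) ≤ ENNReal.ofReal (Real.exp (-(a * (κ * (β * (c1 * K - F.card)))))) := by
      intro K
      set T : Finset (Fin d → ℤ) := (Finset.range K).biUnion (shell d) \ F with hTdef
      have hTne : ∀ y ∈ T, y ≠ 0 := by
        intro y hy
        rw [hTdef, Finset.mem_sdiff, Finset.mem_biUnion] at hy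
        obtain ⟨⟨k, _, hk⟩, _⟩ := hy
        exact shell_ne_zero hd hk
      have hTnF : ∀ y ∈ T, y ∉ F := fun y hy => (Finset.mem_sdiff.mp hy).2
      have hsub1 : E F ⊆ {ω | ∀ y ∈ T, Ed 0 y ω = false} := by
        intro ω hω y hy
        exact hω y (hTnF y hy) (hTne y hy)
      set Tp : Finset ((Fin d → ℤ) × (Fin d → ℤ)) :=
        T.image (fun y => ((0 : Fin d → ℤ), y)) with hTpdef
      have hok : OkPairs ∅ Tp := by
        refine ⟨?_, ?_, Finset.disjoint_empty_left _⟩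
        · intro p hp
          rw [Finset.empty_union, hTpdef, Finset.mem_image] at hp
          obtain ⟨y, hy, rfl⟩ := hp
          simpa using (hTne y hy).symm
        · intro p hp hswap
          rw [Finset.empty_union, hTpdef, Finset.mem_image] at hp
          rw [Finset.empty_union, hTpdef, Finset.mem_image] at hswap
          obtain ⟨y, hy, rfl⟩ := hp
          obtain ⟨z, hz, hzz⟩ := hswap
          have h0y : ((0 : Fin d → ℤ), z).1 = (Prod.swap ((0 : Fin d → ℤ), y)).1 :=
            congrArg Prod.fst hzz
          simp only [Prod.fst_swap] at h0y
          exact (hTne y hy) h0y.symm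
      have hmodel := h_model ∅ Tp hok
      have hsetEq : {ω | (∀ p ∈ (∅ : Finset ((Fin d → ℤ) × (Fin d → ℤ))), Ed p.1 p.2 ω = true) ∧
          ∀ p ∈ Tp, Ed p.1 p.2 ω = false} = {ω | ∀ y ∈ T, Ed 0 y ω = false} := by
        ext ω
        simp [hTpdef]
      have hint : ∀ ω, (∏ p ∈ (∅ : Finset ((Fin d → ℤ) × (Fin d → ℤ))), ENNReal.ofReal
            (1 - Real.exp (-(lam * W p.1 ω * W p.2 ω / znorm d (p.1 - p.2) ^ α)))) *
          ∏ p ∈ Tp, ENNReal.ofReal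
            (Real.exp (-(lam * W p.1 ω * W p.2 ω / znorm d (p.1 - p.2) ^ α)))
          = ∏ y ∈ T, g y (W y ω) := by
        intro ω
        rw [Finset.prod_empty, one_mul, hTpdef, Finset.prod_image
          (fun y _ z _ h => ((Prod.mk.injEq _ _ _ _).mp h).2)]
        apply Finset.prod_congr rfl
        intro y hy
        have harg : lam * W ((0 : Fin d → ℤ), y).1 ω * W ((0 : Fin d → ℤ), y).2 ω /
            znorm d (((0 : Fin d → ℤ), y).1 - ((0 : Fin d → ℤ), y).2) ^ α = c y * W y ω := by
          simp only
          rw [hW0 ω, znorm_zero_sub, hcdef]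
          ring
        rw [hgdef]
        simp only
        rw [harg]
      -- the factor-wise bound
      have hfactor : ∀ y ∈ T, ∫⁻ ω, g y (Z ω) ∂ℙ ≤
          ENNReal.ofReal (Real.exp (-(a * (κ * min (c y * δ) 1)))) := by
        intro y _
        have := factor_bound (Z := Z) (hWmeas y0) (fun ω => hWnn y0 ω) hδ (hcnn y)
        simpa [hgdef, hadef, hκdef] using this
      -- the sum lower bound
      have hsum : β * (c1 * K - F.card) ≤ ∑ y ∈ T, min (c y * δ) 1 := by
        have hterm : ∀ y ∈ T, β * (znorm d y ^ α)⁻¹ ≤ min (c y * δ) 1 := by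
          intro y hy
          have hN1 : (1:ℝ) ≤ znorm d y ^ α :=
            Real.one_le_rpow (one_le_znorm (hTne y hy)) hα.le
          have hNpos : (0:ℝ) < znorm d y ^ α := lt_of_lt_of_le one_pos hN1
          have hrw : c y * δ = (lam * w * δ) * (znorm d y ^ α)⁻¹ := by
            rw [hcdef]; ring
          have hminN : min ((znorm d y ^ α)⁻¹) 1 = (znorm d y ^ α)⁻¹ :=
            min_eq_left (inv_le_one_of_one_le₀ hN1)
          calc β * (znorm d y ^ α)⁻¹
              = min (lam * w * δ) 1 * min ((znorm d y ^ α)⁻¹) 1 := by rw [hβdef, hminN]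
            _ ≤ min ((lam * w * δ) * (znorm d y ^ α)⁻¹) 1 :=
                min_one_mul_le (by positivity) (by positivity)
            _ = min (c y * δ) 1 := by rw [hrw]
        calc β * (c1 * K - F.card)
            ≤ β * ∑ y ∈ T, (znorm d y ^ α)⁻¹ := by
              apply mul_le_mul_of_nonneg_left _ hβ.le
              rw [hTdef, hc1def]
              exact shells_sum_sdiff hd hα hαd K F
          _ = ∑ y ∈ T, β * (znorm d y ^ α)⁻¹ := Finset.mul_sum _ _ _
          _ ≤ ∑ y ∈ T, min (c y * δ) 1 := Finset.sum_le_sum hterm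
      -- main chain
      calc ℙ (E F) ≤ ℙ {ω | ∀ y ∈ T, Ed 0 y ω = false} := measure_mono hsub1
        _ = ∫⁻ ω, ∏ y ∈ T, g y (W y ω) ∂ℙ := by
            rw [← hsetEq, hmodel]
            exact lintegral_congr (fun ω => hint ω)
        _ = ∏ y ∈ T, ∫⁻ ω, g y (W y ω) ∂ℙ :=
            lintegral_prod_comp_indep hiid hWmeas g hgmeas T
        _ = ∏ y ∈ T, ∫⁻ ω, g y (Z ω) ∂ℙ := by
            apply Finset.prod_congr rfl
            intro y hy
            exact ((hident y y0 (hTne y hy) hy0ne).comp (hgmeas y)).lintegral_eq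
        _ ≤ ∏ y ∈ T, ENNReal.ofReal (Real.exp (-(a * (κ * min (c y * δ) 1)))) :=
            Finset.prod_le_prod' hfactor
        _ = ENNReal.ofReal (Real.exp (∑ y ∈ T, -(a * (κ * min (c y * δ) 1)))) := by
            rw [Real.exp_sum, ← ENNReal.ofReal_prod_of_nonneg
              (fun y _ => (Real.exp_pos _).le)]
        _ ≤ ENNReal.ofReal (Real.exp (-(a * (κ * (β * (c1 * K - F.card)))))) := by
            apply ENNReal.ofReal_le_ofReal
            apply Real.exp_le_exp.mpr
            have hdist : ∑ y ∈ T, -(a * (κ * min (c y * δ) 1))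
                = -(a * (κ * ∑ y ∈ T, min (c y * δ) 1)) := by
              rw [Finset.mul_sum, Finset.mul_sum]
              exact Finset.sum_neg_distrib _
            rw [hdist]
            apply neg_le_neg
            exact mul_le_mul_of_nonneg_left
              (mul_le_mul_of_nonneg_left hsum hκ.le) ha.le
    -- conclude by letting K → ∞
    have htend : Filter.Tendsto
        (fun K : ℕ => ENNReal.ofReal (Real.exp (-(a * (κ * (β * (c1 * K - F.card)))))))
        Filter.atTop (nhds 0) := by
      have h1 : Filter.Tendsto (fun K : ℕ => c1 * (K:ℝ) - F.card)
          Filter.atTop Filter.atTop := by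
        have h0 := (tendsto_natCast_atTop_atTop (R := ℝ)).const_mul_atTop hc1
        have := Filter.tendsto_atTop_add_const_right Filter.atTop (-(F.card:ℝ)) h0
        simpa [sub_eq_add_neg] using this
      have h2 := ((h1.const_mul_atTop hβ).const_mul_atTop hκ).const_mul_atTop ha
      have h3 := Filter.tendsto_neg_atTop_atBot.comp h2
      have h4 := Real.tendsto_exp_atBot.comp h3
      have h5 := ENNReal.tendsto_ofReal (a := 0) (by simpa [Function.comp] using h4)
      simpa [Function.comp, ENNReal.ofReal_zero] using h5
    have hle : ℙ (E F) ≤ 0 := ge_of_tendsto' htend key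
    exact le_antisymm hle (zero_le)
  rw [MeasureTheory.ae_iff]
  refine measure_mono_null (fun ω hω => ?_) (measure_iUnion_null (fun F => main F))
  simp only [Set.mem_setOf_eq, Set.not_infinite] at hω
  refine Set.mem_iUnion.mpr ⟨hω.toFinset, ?_⟩
  intro y hyF hy0
  by_contra h
  have hmem : y ∈ hω.toFinset := by
    rw [Set.Finite.mem_toFinset]
    exact ⟨hy0, by revert h; cases (Ed 0 y ω) <;> simp⟩
  exact hyF hmem
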